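/- Cycle-popping partial order: define on a poppable collection 𝔏 of coloured cycles the relation C ≺ C' if there is a chain C = C_j, C_{j−1}, …, C_0 = C' in 𝔏 such that consecutive cycles C_{r−1}, C_r share a vertex whose colour in C_r is one greater than its colour in C_{r−1}. Then C ≺ C' holds if and only if in every valid popping order of 𝔏, C' is popped before C. In particular ≺ is a (strict) partial order on 𝔏. -/

import Mathlib

open scoped Classical

variable {V : Type*} [DecidableEq V]

/-- `C` is a coloured cycle with respect to the stacks of arrows `σ`
(`σ v i` = head of the arrow of colour `i` at `v`): a set of (vertex, colour)
pairs along distinct vertices `g 0, …, g r` with `σ (g j) (c j) = g (j+1)`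
cyclically. -/
def IsCycle (σ : V → ℕ → V) (C : Finset (V × ℕ)) : Prop :=
  ∃ (r : ℕ) (g : Fin (r + 1) → V) (c : Fin (r + 1) → ℕ),
    Function.Injective g ∧
    C = Finset.image (fun j => (g j, c j)) Finset.univ ∧
    ∀ j : Fin (r + 1), σ (g j) (c j) = g (j + 1)

/-- a valid popping order for the collection `L` of coloured cycles: each cycle
is on top of the stacks when popped, i.e. the colour of each of its vertices
equals the number of previously popped cycles through that vertex. -/
def ValidEnum (L : Finset (Finset (V × ℕ))) (l : List (Finset (V × ℕ))) : Prop :=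
  l.Nodup ∧ l.toFinset = L ∧
  ∀ (i : ℕ) (hi : i < l.length), ∀ p ∈ l.get ⟨i, hi⟩,
    p.2 = ((l.take i).filter fun C => ∃ j, (p.1, j) ∈ C).length

/-- one step of the domination relation: `C` and `C'` share a vertex whose
colour in `C` is one greater than its colour in `C'`. -/
def AdjCyc (L : Finset (Finset (V × ℕ))) (C C' : Finset (V × ℕ)) : Prop :=
  C ∈ L ∧ C' ∈ L ∧ ∃ v i, (v, i + 1) ∈ C ∧ (v, i) ∈ C'

/-- the relation `C ≺ C'`: a chain `C = C_j, …, C_0 = C'` of consecutive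
`AdjCyc`-related cycles in `L`. -/
def Prec (L : Finset (Finset (V × ℕ))) (C C' : Finset (V × ℕ)) : Prop :=
  Relation.TransGen (AdjCyc L) C C'

/-! ### auxiliary definitions -/

/-- count of cycles through `v` among the first `k` entries of `l`. -/
noncomputable def cnt (l : List (Finset (V × ℕ))) (v : V) (k : ℕ) : ℕ :=
  ((l.take k).filter fun C => ∃ j, (v, j) ∈ C).length

lemma cnt_mono (l : List (Finset (V × ℕ))) (v : V) {k k' : ℕ} (h : k ≤ k') :
    cnt l v k ≤ cnt l v k' := by
  have hs : List.Sublist (l.take k) (l.take k') := by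
    rw [show l.take k = (l.take k').take k by rw [List.take_take, min_eq_left h]]
    exact List.take_sublist _ _
  exact (hs.filter _).length_le

lemma cnt_succ (l : List (Finset (V × ℕ))) (v : V) {k : ℕ} (hk : k < l.length) :
    cnt l v (k + 1) =
      cnt l v k + (if ∃ j, (v, j) ∈ l.get ⟨k, hk⟩ then 1 else 0) := by
  unfold cnt
  rw [List.take_succ, List.getElem?_eq_getElem hk, List.filter_append]
  by_cases h : ∃ j, (v, j) ∈ l.get ⟨k, hk⟩
  · have h' : ∃ j, (v, j) ∈ l[k] := h
    simp [h, h', List.filter_cons]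
  · have h' : ¬ ∃ j, (v, j) ∈ l[k] := h
    simp [h, h', List.filter_cons]

lemma colour {L : Finset (Finset (V × ℕ))} {l : List (Finset (V × ℕ))}
    (hl : ValidEnum L l) {k : ℕ} (hk : k < l.length) {v : V} {j : ℕ}
    (hp : (v, j) ∈ l.get ⟨k, hk⟩) : j = cnt l v k :=
  hl.2.2 k hk (v, j) hp

lemma cnt_lt {l : List (Finset (V × ℕ))} {v : V} {k m : ℕ} (hk : k < l.length)
    (hkm : k < m) (h : ∃ j, (v, j) ∈ l.get ⟨k, hk⟩) :
    cnt l v k < cnt l v m := by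
  have h1 := cnt_succ l v hk
  rw [if_pos h] at h1
  have h2 := cnt_mono l v (show k + 1 ≤ m from hkm)
  omega

lemma pos_lt {L : Finset (Finset (V × ℕ))} {l : List (Finset (V × ℕ))}
    (hl : ValidEnum L l) {k m : ℕ} (hk : k < l.length) (hm : m < l.length)
    {v : V} {i j : ℕ} (hD : (v, i) ∈ l.get ⟨k, hk⟩) (hE : (v, j) ∈ l.get ⟨m, hm⟩)
    (hji : j < i) : m < k := by
  have hi := colour hl hk hD
  have hj := colour hl hm hE
  by_contra hcon
  push_neg at hcon
  rcases eq_or_lt_of_le hcon with h | h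
  · subst h; omega
  · have := cnt_lt hk h ⟨i, hD⟩
    omega

lemma pos_eq {L : Finset (Finset (V × ℕ))} {l : List (Finset (V × ℕ))}
    (hl : ValidEnum L l) {k m : ℕ} (hk : k < l.length) (hm : m < l.length)
    {v : V} {i : ℕ} (hD : (v, i) ∈ l.get ⟨k, hk⟩) (hE : (v, i) ∈ l.get ⟨m, hm⟩) :
    k = m := by
  have hi := colour hl hk hD
  have hj := colour hl hm hE
  rcases lt_trichotomy k m with h | h | h
  · have := cnt_lt hk h ⟨i, hD⟩; omega
  · exact h
  · have := cnt_lt hm h ⟨i, hE⟩; omega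

lemma cycle_unique {L : Finset (Finset (V × ℕ))} {l : List (Finset (V × ℕ))}
    (hl : ValidEnum L l) {D E : Finset (V × ℕ)} (hD : D ∈ l) (hE : E ∈ l)
    {v : V} {i : ℕ} (hvD : (v, i) ∈ D) (hvE : (v, i) ∈ E) : D = E := by
  obtain ⟨⟨k, hk⟩, rfl⟩ := List.mem_iff_get.mp hD
  obtain ⟨⟨m, hm⟩, rfl⟩ := List.mem_iff_get.mp hE
  have := pos_eq hl hk hm hvD hvE
  subst this; rfl

lemma exists_prev_aux {L : Finset (Finset (V × ℕ))} {l : List (Finset (V × ℕ))}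
    (hl : ValidEnum L l) (v : V) :
    ∀ k, k ≤ l.length → ∀ i, cnt l v k = i + 1 → ∃ E ∈ l, (v, i) ∈ E := by
  intro k
  induction k with
  | zero => intro _ i hc; simp [cnt] at hc
  | succ k ih =>
    intro hk i hc
    have hk' : k < l.length := hk
    have h1 := cnt_succ l v hk'
    by_cases hP : ∃ j, (v, j) ∈ l.get ⟨k, hk'⟩
    · rw [if_pos hP] at h1
      obtain ⟨j, hj⟩ := hP
      have hcol := colour hl hk' hj
      refine ⟨l.get ⟨k, hk'⟩, List.get_mem l ⟨k, hk'⟩, ?_⟩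
      have : j = i := by omega
      rwa [this] at hj
    · rw [if_neg hP] at h1
      exact ih hk'.le i (by omega)

lemma exists_prev {L : Finset (Finset (V × ℕ))} {l : List (Finset (V × ℕ))}
    (hl : ValidEnum L l) {D : Finset (V × ℕ)} (hD : D ∈ l) {v : V} {i : ℕ}
    (hvD : (v, i + 1) ∈ D) : ∃ E ∈ l, (v, i) ∈ E := by
  obtain ⟨⟨k, hk⟩, rfl⟩ := List.mem_iff_get.mp hD
  exact exists_prev_aux hl v k hk.le i (colour hl hk hvD).symm

lemma mem_L_of_mem {L : Finset (Finset (V × ℕ))} {l : List (Finset (V × ℕ))}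
    (hl : ValidEnum L l) {D : Finset (V × ℕ)} (hD : D ∈ l) : D ∈ L := by
  rw [← hl.2.1]; exact List.mem_toFinset.2 hD

lemma prec_of_lt {L : Finset (Finset (V × ℕ))} {l : List (Finset (V × ℕ))}
    (hl : ValidEnum L l) :
    ∀ i : ℕ, ∀ {D E : Finset (V × ℕ)} {v : V} {j : ℕ},
      D ∈ l → E ∈ l → (v, i) ∈ D → (v, j) ∈ E → j < i → Prec L D E := by
  intro i
  induction i with
  | zero => intro D E v j _ _ _ _ hj; omega
  | succ i ih =>
    intro D E v j hD hE hvD hvE hj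
    obtain ⟨F, hF, hvF⟩ := exists_prev hl hD hvD
    have adj : AdjCyc L D F :=
      ⟨mem_L_of_mem hl hD, mem_L_of_mem hl hF, v, i, hvD, hvF⟩
    rcases Nat.lt_or_ge j i with h | h
    · exact Relation.TransGen.head adj (ih hF hE hvF hvE h)
    · have hji : j = i := by omega
      subst hji
      have : E = F := cycle_unique hl hE hF hvE hvF
      subst this
      exact Relation.TransGen.single adj

lemma adj_idx {L : Finset (Finset (V × ℕ))} {l : List (Finset (V × ℕ))}
    (hl : ValidEnum L l) {C C' : Finset (V × ℕ)} (h : AdjCyc L C C') :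
    l.idxOf C' < l.idxOf C := by
  obtain ⟨hCL, hCL', v, i, hvC, hvC'⟩ := h
  have hC : C ∈ l := by rw [← List.mem_toFinset, hl.2.1]; exact hCL
  have hC' : C' ∈ l := by rw [← List.mem_toFinset, hl.2.1]; exact hCL'
  have hk : l.idxOf C < l.length := List.idxOf_lt_length_iff.2 hC
  have hm : l.idxOf C' < l.length := List.idxOf_lt_length_iff.2 hC'
  have e1 : l.get ⟨l.idxOf C, hk⟩ = C := List.idxOf_get hk
  have e2 : l.get ⟨l.idxOf C', hm⟩ = C' := List.idxOf_get hm
  exact pos_lt hl hk hm (by rw [e1]; exact hvC) (by rw [e2]; exact hvC') (Nat.lt_succ_self i)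

lemma prec_imp {L : Finset (Finset (V × ℕ))} {C C' : Finset (V × ℕ)}
    (h : Prec L C C') {l : List (Finset (V × ℕ))} (hl : ValidEnum L l) :
    l.idxOf C' < l.idxOf C := by
  induction h with
  | single hadj => exact adj_idx hl hadj
  | tail _ hadj ih => exact (adj_idx hl hadj).trans ih


lemma mem_take' {l : List (Finset (V × ℕ))} {k : ℕ} {x : Finset (V × ℕ)}
    (h : x ∈ l.take k) : ∃ m, ∃ hm : m < l.length, m < k ∧ l[m] = x := by
  obtain ⟨m, hmlen, hx⟩ := List.mem_iff_getElem.mp h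
  have h1 : m < k ∧ m < l.length := by
    rw [List.length_take] at hmlen; omega
  exact ⟨m, h1.2, h1.1, by rw [← hx]; simp⟩

lemma mem_drop' {l : List (Finset (V × ℕ))} {k : ℕ} {x : Finset (V × ℕ)}
    (h : x ∈ l.drop k) : ∃ m, ∃ hm : m < l.length, k ≤ m ∧ l[m] = x := by
  obtain ⟨m, hmlen, hx⟩ := List.mem_iff_getElem.mp h
  have h1 : k + m < l.length := by
    rw [List.length_drop] at hmlen; omega
  exact ⟨k + m, h1, Nat.le_add_right _ _, by rw [← hx]; simp⟩

lemma filter_decomp {l : List (Finset (V × ℕ))} (q : Finset (V × ℕ) → Bool)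
    {k : ℕ} (hk : k < l.length) (hq : q l[k] = true) :
    l.filter q = (l.take k).filter q ++ l[k] :: (l.drop (k + 1)).filter q := by
  conv_lhs => rw [← List.take_append_drop k l, List.drop_eq_getElem_cons hk]
  rw [List.filter_append, List.filter_cons, if_pos hq]

lemma not_mem_take {l : List (Finset (V × ℕ))} (hnd : l.Nodup) {k : ℕ}
    (hk : k < l.length) : l[k] ∉ l.take k := by
  intro hmem
  obtain ⟨m, hm, hmk, he⟩ := mem_take' hmem
  have : k = m := hnd.getElem_inj_iff.mp he.symm
  omega

lemma take_filter_eq {l : List (Finset (V × ℕ))} (hnd : l.Nodup)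
    (q : Finset (V × ℕ) → Bool) {k : ℕ} (hk : k < l.length) (hq : q l[k] = true)
    {i : ℕ} (hi : i < (l.filter q).length) (hgot : (l.filter q)[i] = l[k]) :
    i = ((l.take k).filter q).length ∧
      (l.filter q).take i = (l.take k).filter q := by
  have hdec := filter_decomp q hk hq
  have hnmem : l[k] ∉ (l.take k).filter q :=
    fun h => not_mem_take hnd hk (List.mem_of_mem_filter h)
  have hidx : (l.filter q).idxOf l[k] = ((l.take k).filter q).length := by
    rw [hdec, List.idxOf_append_of_notMem hnmem]
    simp
  have hndf : (l.filter q).Nodup := hnd.filter q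
  have hmemf : l[k] ∈ l.filter q := by
    rw [hdec]; exact List.mem_append_right _ (List.mem_cons_self)
  have hlt : (l.filter q).idxOf l[k] < (l.filter q).length :=
    List.idxOf_lt_length_iff.2 hmemf
  have hgot2 : (l.filter q)[(l.filter q).idxOf l[k]] = l[k] :=
    List.getElem_idxOf hlt
  have hie : i = (l.filter q).idxOf l[k] :=
    hndf.getElem_inj_iff.mp (by rw [hgot, hgot2])
  constructor
  · omega
  · rw [hie, hidx, hdec, List.take_left' rfl]


lemma valid_reorder {L : Finset (Finset (V × ℕ))} {l₀ : List (Finset (V × ℕ))}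
    (hl : ValidEnum L l₀) (q : Finset (V × ℕ) → Bool)
    (hQ : ∀ D E, q D = true → Prec L D E → q E = true) :
    ValidEnum L (l₀.filter q ++ l₀.filter fun D => !q D) := by
  have hperm : (l₀.filter q ++ l₀.filter (fun D => !q D)).Perm l₀ := l₀.filter_append_perm q
  refine ⟨hperm.nodup_iff.mpr hl.1, by rw [List.toFinset_eq_of_perm _ _ hperm]; exact hl.2.1, ?_⟩
  intro i hi p hp
  obtain ⟨v, j⟩ := p
  dsimp only at hp ⊢
  set pv : Finset (V × ℕ) → Bool := fun D => decide (∃ j', (v, j') ∈ D) with hpv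
  set A := l₀.filter q with hA
  set B := l₀.filter (fun D => !q D) with hB
  by_cases hiA : i < A.length
  · -- the popped cycle is in the `q` part
    have hD : (A ++ B).get ⟨i, hi⟩ = A[i] := by
      rw [List.get_eq_getElem]; exact List.getElem_append_left hiA
    have hDA : A[i] ∈ A := A.getElem_mem hiA
    have hDl : A[i] ∈ l₀ := List.mem_of_mem_filter hDA
    obtain ⟨k, hk, hgk⟩ := List.mem_iff_getElem.mp hDl
    have hq : q l₀[k] = true := by rw [hgk]; exact (List.mem_filter.mp hDA).2
    obtain ⟨hie, htake⟩ := take_filter_eq hl.1 q hk hq hiA (by rw [← hgk])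
    have hp' : (v, j) ∈ l₀[k] := by rw [hgk, ← hD]; exact hp
    have hpg : (v, j) ∈ l₀.get ⟨k, hk⟩ := by rw [List.get_eq_getElem]; exact hp'
    have hcol : j = cnt l₀ v k := colour hl hk hpg
    have ht1 : (A ++ B).take i = (l₀.take k).filter q := by
      rw [List.take_append, Nat.sub_eq_zero_of_le hiA.le,
        List.take_zero, List.append_nil, hA, htake]
    have key : ((l₀.take k).filter q).filter pv = (l₀.take k).filter pv := by
      rw [List.filter_filter]
      refine List.filter_congr ?_
      intro x hx
      by_cases hpvx : pv x = true
      · obtain ⟨j', hj'⟩ := of_decide_eq_true hpvx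
        obtain ⟨m, hm, hmk, hgm⟩ := mem_take' hx
        have hj'm : (v, j') ∈ l₀.get ⟨m, hm⟩ := by
          rw [List.get_eq_getElem, hgm]; exact hj'
        have hcolx : j' = cnt l₀ v m := colour hl hm hj'm
        have hlt : cnt l₀ v m < cnt l₀ v k := cnt_lt hm hmk ⟨j', hj'm⟩
        have hxl : x ∈ l₀ := by rw [← hgm]; exact l₀.getElem_mem hm
        have hprec : Prec L l₀[k] x :=
          prec_of_lt hl j (l₀.getElem_mem hk) hxl hp' hj' (by omega)
        have hqx : q x = true := hQ _ _ hq hprec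
        rw [hpvx, hqx]; rfl
      · rw [Bool.not_eq_true] at hpvx
        rw [hpvx, Bool.false_and]
    rw [ht1, key, hcol]
    rfl
  · -- the popped cycle is in the `¬q` part
    have hAi : A.length ≤ i := le_of_not_gt hiA
    have hilen : i < A.length + B.length := by
      have := hi; rwa [List.length_append] at this
    have hi' : i - A.length < B.length := by omega
    have hD : (A ++ B).get ⟨i, hi⟩ = B[i - A.length] := by
      rw [List.get_eq_getElem]; exact List.getElem_append_right hAi
    have hDB : B[i - A.length] ∈ B := B.getElem_mem hi'
    have hDl : B[i - A.length] ∈ l₀ := List.mem_of_mem_filter hDB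
    obtain ⟨k, hk, hgk⟩ := List.mem_iff_getElem.mp hDl
    have hnq : (!q l₀[k]) = true := by rw [hgk]; exact (List.mem_filter.mp hDB).2
    have hqf : q l₀[k] = false := by
      rw [Bool.not_eq_true'] at hnq; exact hnq
    obtain ⟨hie, htake⟩ :=
      take_filter_eq hl.1 (fun D => !q D) hk hnq hi' (by rw [← hgk])
    have hp' : (v, j) ∈ l₀[k] := by rw [hgk, ← hD]; exact hp
    have hpg : (v, j) ∈ l₀.get ⟨k, hk⟩ := by rw [List.get_eq_getElem]; exact hp'
    have hcol : j = cnt l₀ v k := colour hl hk hpg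
    have ht1 : (A ++ B).take i = A ++ (l₀.take k).filter (fun D => !q D) := by
      have hieq : i = A.length + (i - A.length) := by omega
      rw [hieq, List.take_append,
        List.take_of_length_le (by omega), Nat.add_sub_cancel_left, hB, htake]
    -- every cycle through `v` in the `q`-part occurs before position `k`
    have hnil : (l₀.drop k).filter (fun a => pv a && q a) = [] := by
      rw [List.filter_eq_nil_iff]
      intro x hx hcon
      have hpvx : pv x = true := by
        have := hcon; simp only [Bool.and_eq_true] at this; exact this.1
      have hqx : q x = true := by
        have := hcon; simp only [Bool.and_eq_true] at this; exact this.2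
      obtain ⟨m, hm, hkm, hgm⟩ := mem_drop' hx
      rcases Nat.eq_or_lt_of_le hkm with heq | hlt
      · subst heq
        rw [hgm] at hqf
        rw [hqf] at hqx
        exact Bool.false_ne_true hqx
      · obtain ⟨j', hj'⟩ := of_decide_eq_true hpvx
        have hj'm : (v, j') ∈ l₀.get ⟨m, hm⟩ := by
          rw [List.get_eq_getElem, hgm]; exact hj'
        have hcolx : j' = cnt l₀ v m := colour hl hm hj'm
        have hltc : cnt l₀ v k < cnt l₀ v m := cnt_lt hk hlt ⟨j, hpg⟩
        have hxl : x ∈ l₀ := by rw [← hgm]; exact l₀.getElem_mem hm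
        have hprec : Prec L x l₀[k] :=
          prec_of_lt hl j' hxl (l₀.getElem_mem hk) hj' hp' (by omega)
        have hcontr : q l₀[k] = true := hQ _ _ hqx hprec
        rw [hqf] at hcontr
        exact Bool.false_ne_true hcontr
    set s := (l₀.take k).filter pv with hs
    have hsplit : (s.filter q).length + (s.filter (fun x => !q x)).length
        = s.length := by
      have := (s.filter_append_perm q).length_eq
      rwa [List.length_append] at this
    have eq1 : (A.filter pv).length = (s.filter q).length := by
      rw [hA, List.filter_filter, hs, List.filter_filter]
      have h2 : l₀.filter (fun a => pv a && q a)
          = (l₀.take k).filter (fun a => pv a && q a) := by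
        conv_lhs => rw [← List.take_append_drop k l₀]
        rw [List.filter_append, hnil, List.append_nil]
      rw [h2]
      congr 1
      exact List.filter_congr fun x _ => Bool.and_comm _ _
    have eq3 : (((l₀.take k).filter (fun D => !q D)).filter pv).length
        = (s.filter (fun x => !q x)).length := by
      rw [List.filter_filter, hs, List.filter_filter]
      congr 1
      exact List.filter_congr fun x _ => Bool.and_comm _ _
    rw [ht1, List.filter_append, List.length_append, eq1, eq3, hsplit, hcol]
    rfl


/-- For a poppable collection `L` of coloured cycles,
`C ≺ C'` holds iff in every valid popping order of `L` the cycle `C'` is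
popped before `C`; in particular, `≺` is a strict partial order on `L`. -/
theorem stmt12 (σ : V → ℕ → V) (L : Finset (Finset (V × ℕ)))
    (hcyc : ∀ C ∈ L, IsCycle σ C) (hpop : ∃ l, ValidEnum L l) :
    (∀ C ∈ L, ∀ C' ∈ L,
      (Prec L C C' ↔ ∀ l, ValidEnum L l → l.idxOf C' < l.idxOf C)) ∧
    (∀ C ∈ L, ¬ Prec L C C) ∧
    (∀ C C' C'', Prec L C C' → Prec L C' C'' → Prec L C C'') := by
  obtain ⟨l₀, hl₀⟩ := hpop
  refine ⟨?_, fun C _ h => lt_irrefl _ (prec_imp h hl₀),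
    fun C C' C'' h1 h2 => h1.trans h2⟩
  intro C hC C' hC'
  constructor
  · intro h l hl; exact prec_imp h hl
  · intro h
    by_contra hnp
    have hne : C' ≠ C := by
      rintro rfl; exact lt_irrefl _ (h l₀ hl₀)
    set q : Finset (V × ℕ) → Bool := fun D => decide (D = C ∨ Prec L C D) with hq
    have hQ : ∀ D E, q D = true → Prec L D E → q E = true := by
      intro D E hD hDE
      apply decide_eq_true
      rcases of_decide_eq_true hD with h1 | h1
      · right; rw [← h1]; exact hDE
      · right; exact h1.trans hDE
    have hval := valid_reorder hl₀ q hQ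
    have hlt := h _ hval
    have hCl : C ∈ l₀ := by rw [← List.mem_toFinset, hl₀.2.1]; exact hC
    have hC'l : C' ∈ l₀ := by rw [← List.mem_toFinset, hl₀.2.1]; exact hC'
    have hCA : C ∈ l₀.filter q :=
      List.mem_filter.mpr ⟨hCl, decide_eq_true (Or.inl rfl)⟩
    have hnq : ¬(C' = C ∨ Prec L C C') := by
      rintro (h1 | h1)
      · exact hne h1
      · exact hnp h1
    have hqC' : q C' = false := decide_eq_false hnq
    have hC'A : C' ∉ l₀.filter q := by
      intro hmem
      have := (List.mem_filter.mp hmem).2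
      rw [hqC'] at this
      exact Bool.false_ne_true this
    have h1 : (l₀.filter q ++ l₀.filter fun D => !q D).idxOf C
        < (l₀.filter q).length := by
      rw [List.idxOf_append_of_mem hCA]
      exact List.idxOf_lt_length_iff.2 hCA
    have h2 : (l₀.filter q).length
        ≤ (l₀.filter q ++ l₀.filter fun D => !q D).idxOf C' := by
      rw [List.idxOf_append_of_notMem hC'A]
      exact Nat.le_add_right _ _
    omega
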